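/- For any Schwartz function φ on ℝ, the sum over j ≥ 0 of φ(2π(2j+1)) equals (i/2)·(1/(2π))·⟨1/sin(2π(t+i0)), φ̂(t)⟩, where φ̂ is the Fourier transform φ̂(k)=∫φ(λ)e^{-ikλ}dλ and the distribution 1/sin(c(t+i0)) is defined as the limit as ε→0+ of ∫ φ̂(t)/sin(c(t+iε)) dt. -/

import Mathlib

open MeasureTheory Filter Topology Real FourierTransform

noncomputable def fourierT (φ : SchwartzMap ℝ ℂ) (k : ℝ) : ℂ :=
  ∫ l : ℝ, φ l * Complex.exp (-(Complex.I * k * l))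

lemma fourierT_eq (φ : SchwartzMap ℝ ℂ) (k : ℝ) :
    fourierT φ k = 𝓕 (⇑φ) (k / (2 * π)) := by
  rw [Real.fourier_real_eq_integral_exp_smul, fourierT]
  congr 1
  ext v
  rw [smul_eq_mul, mul_comm]
  congr 2
  have : -2 * π * v * (k / (2 * π)) = -(k * v) := by
    field_simp
  rw [this]
  push_cast
  ring

lemma fourierT_integrable (φ : SchwartzMap ℝ ℂ) : Integrable (fourierT φ) := by
  have h : Integrable (𝓕 (⇑φ)) := by
    rw [← SchwartzMap.fourier_coe]
    exact (SchwartzMap.fourierTransformCLM ℂ φ).integrable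
  have := h.comp_div (R := 2 * π) (by positivity)
  exact this.congr (Eventually.of_forall fun t => (fourierT_eq φ t).symm)

lemma key_inversion (φ : SchwartzMap ℝ ℂ) (a : ℝ) :
    ∫ t : ℝ, fourierT φ t * Complex.exp (Complex.I * a * t) = 2 * π * φ a := by
  have h2π : (2 * π : ℝ) ≠ 0 := by positivity
  set g : ℝ → ℂ := fun t => fourierT φ t * Complex.exp (Complex.I * a * t) with hg
  have h1 := MeasureTheory.Measure.integral_comp_mul_left g (2 * π)
  rw [abs_of_pos (by positivity : (0:ℝ) < (2*π)⁻¹)] at h1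
  have h2 : ∫ y : ℝ, g y = (2 * π) • ∫ x : ℝ, g (2 * π * x) := by
    rw [h1, smul_smul, mul_inv_cancel₀ h2π, one_smul]
  have h3 : ∀ s : ℝ, g (2 * π * s) = 𝓕 (⇑φ) s * Complex.exp (↑(2 * π * (s * a)) * Complex.I) := by
    intro s
    rw [hg]
    simp only
    rw [fourierT_eq]
    congr 2
    · congr 1; field_simp
    · push_cast; ring
  have h4 : (∫ x : ℝ, g (2 * π * x)) = 𝓕⁻ (𝓕 (⇑φ)) a := by
    rw [Real.fourierInv_eq']
    refine integral_congr_ae (Eventually.of_forall fun s => ?_)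
    show g (2 * π * s) = _
    rw [h3 s]
    simp only [smul_eq_mul, RCLike.inner_apply, conj_trivial]
    ring
  have h5 : 𝓕⁻ (𝓕 (⇑φ)) a = φ a := by
    rw [φ.continuous.fourierInv_fourier_eq φ.integrable
      (by rw [← SchwartzMap.fourier_coe]
          exact (SchwartzMap.fourierTransformCLM ℂ φ).integrable)]
  rw [h2, h4, h5]
  push_cast
  rw [Complex.real_smul]
  push_cast
  ring

lemma sin_inv_expand {ε : ℝ} (hε : 0 < ε) (t : ℝ) :
    (Complex.sin (2 * π * ((t:ℂ) + Complex.I * ε)))⁻¹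
      = -2 * Complex.I *
        ∑' k : ℕ, Complex.exp (2 * π * Complex.I * (2 * k + 1) * ((t:ℂ) + Complex.I * ε)) := by
  set z : ℂ := 2 * π * ((t:ℂ) + Complex.I * ε) with hz
  set w : ℂ := Complex.exp (z * Complex.I) with hwdef
  have hwre : (z * Complex.I).re = -(2 * π * ε) := by
    simp [hz, Complex.mul_re, Complex.mul_im]
  have hw : ‖w‖ < 1 := by
    rw [hwdef, Complex.norm_exp, hwre]
    refine Real.exp_lt_one_iff.2 ?_
    have := Real.pi_pos
    nlinarith
  have hw0 : w ≠ 0 := Complex.exp_ne_zero _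
  have hw2 : ‖w ^ 2‖ < 1 := by
    rw [norm_pow]
    calc ‖w‖ ^ 2 ≤ ‖w‖ := by nlinarith [norm_nonneg w]
    _ < 1 := hw
  have hw2ne : (1 : ℂ) - w ^ 2 ≠ 0 := by
    intro h
    have : w ^ 2 = 1 := by linear_combination -h
    rw [this] at hw2; simp at hw2
  have hterm : ∀ k : ℕ, Complex.exp (2 * π * Complex.I * (2 * k + 1) * ((t:ℂ) + Complex.I * ε))
      = w * (w ^ 2) ^ k := by
    intro k
    have : (2 * π * Complex.I * (2 * k + 1) * ((t:ℂ) + Complex.I * ε))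
        = ((2 * k + 1 : ℕ) : ℂ) * (z * Complex.I) := by
      push_cast; rw [hz]; ring
    rw [this, Complex.exp_nat_mul, ← hwdef, pow_succ, pow_mul, mul_comm]
  have hsum : ∑' k : ℕ, Complex.exp (2 * π * Complex.I * (2 * k + 1) * ((t:ℂ) + Complex.I * ε))
      = w * (1 - w ^ 2)⁻¹ := by
    simp_rw [hterm]
    rw [tsum_mul_left, tsum_geometric_of_norm_lt_one hw2]
  have hnegz : Complex.exp (-z * Complex.I) = w⁻¹ := by
    rw [hwdef, ← Complex.exp_neg]
    ring_nf
  rw [hsum, Complex.sin, hnegz, ← hwdef]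
  refine inv_eq_of_mul_eq_one_left ?_
  have hI : Complex.I * Complex.I = -1 := Complex.I_mul_I
  have h1 : w * (w⁻¹ - w) = 1 - w ^ 2 := by field_simp
  have hu : (1 - w ^ 2) * (1 - w ^ 2)⁻¹ = 1 := mul_inv_cancel₀ hw2ne
  linear_combination (-(1 - w ^ 2)⁻¹ * w * (w⁻¹ - w)) * hI + (1 - w ^ 2)⁻¹ * h1 + hu

lemma exp_split (ε t : ℝ) (k : ℕ) :
    Complex.exp (2 * π * Complex.I * (2 * k + 1) * ((t:ℂ) + Complex.I * ε))
      = (Real.exp (-(2 * π * ε * (2 * k + 1))) : ℂ) *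
        Complex.exp (Complex.I * ((2 * π * (2 * k + 1) : ℝ) : ℂ) * t) := by
  rw [Complex.ofReal_exp, ← Complex.exp_add]
  congr 1
  push_cast
  linear_combination (2 * π * ε * (2 * (k:ℂ) + 1)) * Complex.I_sq

lemma term_norm_one (a t : ℝ) : ‖Complex.exp (Complex.I * (a:ℂ) * t)‖ = 1 := by
  rw [Complex.norm_exp]
  simp [Complex.mul_re]

lemma term_integrable (φ : SchwartzMap ℝ ℂ) (ε : ℝ) (k : ℕ) :
    Integrable (fun t : ℝ => fourierT φ t *
      Complex.exp (2 * π * Complex.I * (2 * k + 1) * ((t:ℂ) + Complex.I * ε))) := by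
  have h : Integrable (fun t : ℝ =>
      Complex.exp (Complex.I * ((2 * π * (2 * k + 1) : ℝ) : ℂ) * t) * fourierT φ t) :=
    (fourierT_integrable φ).bdd_mul
      (Continuous.aestronglyMeasurable (by fun_prop)) (Eventually.of_forall fun t => le_of_eq (term_norm_one _ _))
  refine (h.const_mul ((Real.exp (-(2 * π * ε * (2 * k + 1))) : ℂ))).congr
    (Eventually.of_forall fun t => ?_)
  simp only [exp_split]
  ring

lemma term_integral (φ : SchwartzMap ℝ ℂ) (ε : ℝ) (k : ℕ) :
    ∫ t : ℝ, fourierT φ t *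
        Complex.exp (2 * π * Complex.I * (2 * k + 1) * ((t:ℂ) + Complex.I * ε))
      = (Real.exp (-(2 * π * ε * (2 * k + 1))) : ℂ) * (2 * π * φ (2 * π * (2 * k + 1))) := by
  simp_rw [exp_split, mul_left_comm (fourierT φ _)]
  rw [integral_const_mul, key_inversion φ (2 * π * (2 * k + 1))]

lemma schwartz_summable (φ : SchwartzMap ℝ ℂ) :
    Summable fun k : ℕ => ‖φ (2 * π * (2 * (k:ℝ) + 1))‖ := by
  obtain ⟨C, -, hC⟩ := φ.decay 2 0
  have hsum : Summable (fun k : ℕ => C / ((k:ℝ) + 1) ^ 2) := by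
    have h1 : Summable (fun k : ℕ => 1 / ((k:ℝ) + 1) ^ 2) := by
      have := (summable_nat_add_iff (f := fun n : ℕ => 1 / (n:ℝ) ^ 2) 1).2
        (summable_one_div_nat_pow.2 one_lt_two)
      refine this.congr fun n => ?_
      push_cast
      ring_nf
    simpa [div_eq_mul_inv, mul_comm] using h1.mul_left C
  refine Summable.of_nonneg_of_le (fun k => norm_nonneg _) (fun k => ?_) hsum
  have h1 := hC (2 * π * (2 * (k:ℝ) + 1))
  rw [norm_iteratedFDeriv_zero] at h1
  have hpi := Real.pi_gt_three
  have hx : ((k:ℝ) + 1) ^ 2 ≤ ‖(2 * π * (2 * (k:ℝ) + 1))‖ ^ 2 := by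
    rw [Real.norm_eq_abs, abs_of_pos (by positivity)]
    have : (k:ℝ) + 1 ≤ 2 * π * (2 * (k:ℝ) + 1) := by nlinarith [(Nat.cast_nonneg k : (0:ℝ) ≤ k)]
    nlinarith [(Nat.cast_nonneg k : (0:ℝ) ≤ k)]
  rw [le_div_iff₀ (by positivity)]
  nlinarith [norm_nonneg (φ (2 * π * (2 * (k:ℝ) + 1))), norm_nonneg (2 * π * (2 * (k:ℝ) + 1))]

lemma geom_summable {ε : ℝ} (hε : 0 < ε) :
    Summable fun k : ℕ => Real.exp (-(2 * π * ε * (2 * (k:ℝ) + 1))) := by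
  set r : ℝ := Real.exp (-(2 * π * ε)) with hr
  have hr0 : 0 < r := Real.exp_pos _
  have hr1 : r < 1 := Real.exp_lt_one_iff.2 (by nlinarith [Real.pi_pos])
  refine Summable.of_nonneg_of_le (fun k => (Real.exp_pos _).le) (fun k => ?_)
    (summable_geometric_of_lt_one hr0.le hr1)
  have h1 : Real.exp (-(2 * π * ε * (2 * (k:ℝ) + 1))) = r ^ (2 * k + 1) := by
    rw [hr, ← Real.exp_nat_mul]
    congr 1
    push_cast
    ring
  rw [h1, pow_succ, pow_mul]
  calc (r ^ 2) ^ k * r ≤ (r ^ 2) ^ k * 1 := by nlinarith [pow_nonneg (sq_nonneg r) k]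
  _ = (r ^ 2) ^ k := mul_one _
  _ ≤ r ^ k := by
    refine pow_le_pow_left₀ (sq_nonneg r) ?_ k
    nlinarith

lemma integral_eq_tsum (φ : SchwartzMap ℝ ℂ) {ε : ℝ} (hε : 0 < ε) :
    ∫ t : ℝ, fourierT φ t / Complex.sin (2 * (π : ℂ) * ((t : ℂ) + Complex.I * ε))
      = -2 * Complex.I * ∑' k : ℕ,
          (Real.exp (-(2 * π * ε * (2 * (k:ℝ) + 1))) : ℂ) *
            (2 * π * φ (2 * π * (2 * (k:ℝ) + 1))) := by
  have hswap := integral_tsum_of_summable_integral_norm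
    (F := fun (k : ℕ) (t : ℝ) => fourierT φ t *
      Complex.exp (2 * π * Complex.I * (2 * k + 1) * ((t:ℂ) + Complex.I * ε)))
    (fun k => term_integrable φ ε k) ?_
  · calc ∫ t : ℝ, fourierT φ t / Complex.sin (2 * (π:ℂ) * ((t:ℂ) + Complex.I * ε))
        = ∫ t : ℝ, -2 * Complex.I * ∑' k : ℕ, fourierT φ t *
            Complex.exp (2 * π * Complex.I * (2 * k + 1) * ((t:ℂ) + Complex.I * ε)) := by
          refine integral_congr_ae (Eventually.of_forall fun t => ?_)
          show fourierT φ t / Complex.sin (2 * (π:ℂ) * ((t:ℂ) + Complex.I * ε))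
            = -2 * Complex.I * ∑' k : ℕ, fourierT φ t *
              Complex.exp (2 * π * Complex.I * (2 * k + 1) * ((t:ℂ) + Complex.I * ε))
          rw [div_eq_mul_inv, sin_inv_expand hε t, tsum_mul_left]
          ring
      _ = -2 * Complex.I * ∑' k : ℕ, ∫ t : ℝ, fourierT φ t *
            Complex.exp (2 * π * Complex.I * (2 * k + 1) * ((t:ℂ) + Complex.I * ε)) := by
          rw [integral_const_mul, hswap]
      _ = _ := by
          congr 1
          exact tsum_congr fun k => term_integral φ ε k
  · refine Summable.congr ((geom_summable hε).mul_right (∫ t : ℝ, ‖fourierT φ t‖)) fun k => ?_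
    rw [← integral_const_mul]
    refine integral_congr_ae (Eventually.of_forall fun t => ?_)
    show Real.exp (-(2 * π * ε * (2 * (k:ℝ) + 1))) * ‖fourierT φ t‖
      = ‖fourierT φ t * Complex.exp (2 * π * Complex.I * (2 * k + 1) * ((t:ℂ) + Complex.I * ε))‖
    rw [exp_split, norm_mul, norm_mul, term_norm_one, Complex.norm_real, Real.norm_eq_abs,
      abs_of_pos (Real.exp_pos _)]
    ring

theorem stmt0 (φ : SchwartzMap ℝ ℂ) :
    Tendsto
      (fun ε : ℝ =>
        (Complex.I / 2) * (1 / (2 * (π : ℂ))) *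
          ∫ t : ℝ, fourierT φ t / Complex.sin (2 * (π : ℂ) * ((t : ℂ) + Complex.I * ε)))
      (𝓝[>] (0 : ℝ))
      (𝓝 (∑' j : ℕ, φ (2 * π * (2 * (j : ℝ) + 1)))) := by
  have hπ : (π : ℂ) ≠ 0 := Complex.ofReal_ne_zero.2 Real.pi_ne_zero
  have hmain : Tendsto
      (fun ε : ℝ => ∑' k : ℕ, (Real.exp (-(2 * π * ε * (2 * (k:ℝ) + 1))) : ℂ) *
        φ (2 * π * (2 * (k:ℝ) + 1)))
      (𝓝[>] (0 : ℝ)) (𝓝 (∑' j : ℕ, φ (2 * π * (2 * (j : ℝ) + 1)))) := by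
    refine tendsto_tsum_of_dominated_convergence (schwartz_summable φ) (fun k => ?_) ?_
    · have hc : Continuous fun ε : ℝ =>
          ((Real.exp (-(2 * π * ε * (2 * (k:ℝ) + 1))) : ℝ) : ℂ) * φ (2 * π * (2 * (k:ℝ) + 1)) := by
        fun_prop
      have := (hc.tendsto 0).mono_left (nhdsWithin_le_nhds (s := Set.Ioi (0:ℝ)))
      simpa using this
    · filter_upwards [self_mem_nhdsWithin] with ε (hε : 0 < ε)
      intro k
      rw [norm_mul, Complex.norm_real, Real.norm_eq_abs, abs_of_pos (Real.exp_pos _)]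
      have h1 : Real.exp (-(2 * π * ε * (2 * (k:ℝ) + 1))) ≤ 1 :=
        Real.exp_le_one_iff.2 (by simp only [neg_nonpos]; positivity)
      nlinarith [norm_nonneg (φ (2 * π * (2 * (k:ℝ) + 1))), Real.exp_pos (-(2 * π * ε * (2 * (k:ℝ) + 1)))]
  refine Tendsto.congr' ?_ hmain
  filter_upwards [self_mem_nhdsWithin] with ε (hε : 0 < ε)
  rw [integral_eq_tsum φ hε]
  rw [show ∑' k : ℕ, (Real.exp (-(2 * π * ε * (2 * (k:ℝ) + 1))) : ℂ) *
      (2 * π * φ (2 * π * (2 * (k:ℝ) + 1)))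
    = (2 * (π:ℂ)) * ∑' k : ℕ, (Real.exp (-(2 * π * ε * (2 * (k:ℝ) + 1))) : ℂ) *
      φ (2 * π * (2 * (k:ℝ) + 1)) by
      rw [← tsum_mul_left]
      exact tsum_congr fun k => by ring]
  have key : Complex.I / 2 * (1 / (2 * (π:ℂ))) * (-2 * Complex.I * (2 * (π:ℂ) * 1)) = 1 := by
    field_simp
    linear_combination (-1 : ℂ) * Complex.I_sq
  set S : ℂ := ∑' k : ℕ, (Real.exp (-(2 * π * ε * (2 * (k:ℝ) + 1))) : ℂ) *
    φ (2 * π * (2 * (k:ℝ) + 1)) with hS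
  calc S = (Complex.I / 2 * (1 / (2 * (π:ℂ))) * (-2 * Complex.I * (2 * (π:ℂ) * 1))) * S := by
        rw [key, one_mul]
    _ = Complex.I / 2 * (1 / (2 * (π:ℂ))) * (-2 * Complex.I * (2 * (π:ℂ) * S)) := by ring
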